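/- There is no metric space on four points whose betweenness is isomorphic to the betweenness of Q(4). That is, for every function ρ : W → W → ℝ on a four-element set W satisfying ρ x y ≥ 0, ρ x y = 0 ↔ x = y, ρ x y = ρ y x, and the triangle inequality, the betweenness B(ρ) is not isomorphic to B(Q(4)) = {(p,q,r), (r,p,q), (s,q,p), (q,p,s)}. -/
import Mathlib


/-- A quasi-metric on `V`: nonnegative, vanishing exactly on the diagonal,
and satisfying the (directed) triangle inequality. -/
def IsQuasiMetric {V : Type*} (d : V → V → ℝ) : Prop :=
  (∀ x y, 0 ≤ d x y) ∧ (∀ x y, d x y = 0 ↔ x = y) ∧ (∀ x y z, d x z ≤ d x y + d y z)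

/-- Betweenness: `y` lies between `x` and `z` (all three pairwise distinct). -/
def BtwQM {V : Type*} (d : V → V → ℝ) (x y z : V) : Prop :=
  x ≠ y ∧ y ≠ z ∧ x ≠ z ∧ d x z = d x y + d y z

/-- The line through `x` and `y`. -/
def lineQM {V : Type*} (d : V → V → ℝ) (x y : V) : Set V :=
  {z | d z y = d z x + d x y ∨ d x y = d x z + d z y ∨ d x z = d x y + d y z}

/-- The set of all lines of the space. -/
def linesQM {V : Type*} (d : V → V → ℝ) : Set (Set V) :=
  {ℓ | ∃ x y, x ≠ y ∧ ℓ = lineQM d x y}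

/-- The four points of the space `Q(4)`. -/
inductive P4 : Type
  | p | s | q | r
deriving DecidableEq

open P4

/-- The quasi-metric of the space `Q(4)`. -/
def dQ4 : P4 → P4 → ℝ
  | p, p => 0 | p, s => 1 | p, q => 1 | p, r => 3
  | s, p => 3 | s, s => 0 | s, q => 2 | s, r => 3
  | q, p => 1 | q, s => 2 | q, q => 0 | q, r => 2
  | r, p => 1 | r, s => 1 | r, q => 2 | r, r => 0

/-- The betweenness of `Q(4)`. -/
def BQ4 : Set (P4 × P4 × P4) := {(p, q, r), (r, p, q), (s, q, p), (q, p, s)}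

/-- no metric space on four points has a betweenness isomorphic to
that of `Q(4)`. -/
theorem stmt_4 (W : Type) [Fintype W] (hW : Fintype.card W = 4)
    (ρ : W → W → ℝ)
    (hpos : ∀ x y, 0 ≤ ρ x y)
    (hzero : ∀ x y, ρ x y = 0 ↔ x = y)
    (hsymm : ∀ x y, ρ x y = ρ y x)
    (htri : ∀ x y z, ρ x z ≤ ρ x y + ρ y z) :
    ¬ ∃ f : P4 ≃ W, ∀ x y z : P4,
        (x, y, z) ∈ BQ4 ↔ BtwQM ρ (f x) (f y) (f z) := by
  rintro ⟨f, hf⟩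
  obtain ⟨a, b, c, he⟩ : BtwQM ρ (f p) (f q) (f r) :=
    (hf p q r).mp (by left; rfl)
  have h2 : BtwQM ρ (f r) (f q) (f p) :=
    ⟨b.symm, a.symm, c.symm, by
      rw [hsymm (f r) (f p), he, hsymm (f p) (f q), hsymm (f q) (f r)]; ring⟩
  have h3 := (hf r q p).mpr h2
  simp [BQ4] at h3
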